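/- Let n be even and p̃(T,U) = Π_{j=1}^{n+1}(T - t'_j U) a monic self-reciprocal form in MB_n (coefficients ζ_j with ζ_0 = ζ_{n+1} = 1 and ζ_j = conj(ζ_{n+1-j}), no alternating signs, so Π t'_j = -1). Let q̃(X,Y) = p̃(X+iY, X-iY) = Σ d_j X^{n+1-j}Y^j with d_0 ≠ 0, and define k_m = Σ_j (t'_j)^m and K_n = (k_{j-k})_{0≤j,k≤n}. Then Dis(q̃(X,1)) = 2^{n(n+1)} · det K_n, where Dis(q̃(X,1)) = d_0^{2n} Π_{j<k}(x'_j - x'_k)² over the roots x'_j of q̃(X,1). -/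

import Mathlib

open Complex Finset Polynomial

lemma offdiag_prod (m : ℕ) (v : Fin m → ℂ) :
    ∏ i, ∏ j ∈ Finset.Ioi i, ((v i - v j) * (v j - v i))
      = ∏ i, ∏ j ∈ Finset.univ.erase i, (v i - v j) := by
  have := Finset.prod_prod_Ioi_mul_eq_prod_prod_off_diag (fun a b : Fin m => v b - v a)
  refine this.trans (Finset.prod_congr rfl fun i _ => Finset.prod_congr ?_ fun _ _ => rfl)
  ext k; simp [eq_comm]

lemma card_IoiIio (m : ℕ) (j : Fin (m+1)) : (Finset.Ioi j).card + (Finset.Iio j).card = m := by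
  have : (j:ℕ) ≤ m := Nat.lt_succ_iff.mp j.isLt
  simp
  omega

lemma pair_prod (m : ℕ) (a : Fin (m+1) → ℂ) :
    ∏ j, ∏ k ∈ Finset.Ioi j, (a j * a k) = ∏ j, a j ^ m := by
  have h1 : ∏ j, ∏ k ∈ Finset.Ioi j, (a j * a k)
      = (∏ j, ∏ k ∈ Finset.Ioi j, a j) * (∏ j, ∏ k ∈ Finset.Ioi j, a k) := by
    rw [← Finset.prod_mul_distrib]
    exact Finset.prod_congr rfl fun j _ => Finset.prod_mul_distrib
  have h2 : ∏ j, ∏ k ∈ Finset.Ioi j, a j = ∏ j, a j ^ (Finset.Ioi j).card :=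
    Finset.prod_congr rfl fun j _ => Finset.prod_const _
  have h3 : (∏ j, ∏ k ∈ Finset.Ioi j, a k) = ∏ k, a k ^ (Finset.Iio k).card := by
    rw [Finset.prod_comm' (s := Finset.univ) (t := fun j => Finset.Ioi j)
      (t' := Finset.univ) (s' := fun k => Finset.Iio k) (by simp)]
    exact Finset.prod_congr rfl fun k _ => Finset.prod_const _
  rw [h1, h2, h3, ← Finset.prod_mul_distrib]
  refine Finset.prod_congr rfl fun j _ => ?_
  rw [← pow_add, card_IoiIio]

lemma sum_card_Ioi (m : ℕ) : ∑ j : Fin (m+1), 2 * (Finset.Ioi j).card = m * (m+1) := by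
  have h3 : (∑ j : Fin (m+1), (Finset.Ioi j).card) = ∑ k : Fin (m+1), (Finset.Iio k).card := by
    have h : ∀ j : Fin (m+1), (Finset.Ioi j).card = ∑ k ∈ Finset.Ioi j, 1 := by simp
    simp_rw [h]
    rw [Finset.sum_comm' (s := Finset.univ) (t := fun j => Finset.Ioi j)
      (t' := Finset.univ) (s' := fun k => Finset.Iio k) (by simp)]
    simp
  have h4 : ∑ j : Fin (m+1), ((Finset.Ioi j).card + (Finset.Iio j).card) = (m+1) * m := by
    simp_rw [card_IoiIio]; simp [Finset.sum_const, mul_comm]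
  calc ∑ j : Fin (m+1), 2 * (Finset.Ioi j).card
      = 2 * ∑ j : Fin (m+1), (Finset.Ioi j).card := by rw [Finset.mul_sum]
    _ = (∑ j : Fin (m+1), (Finset.Ioi j).card) + ∑ j : Fin (m+1), (Finset.Iio j).card := by
        rw [two_mul]; nth_rewrite 2 [h3]; rfl
    _ = (m+1)*m := by rw [← Finset.sum_add_distrib, h4]
    _ = m*(m+1) := mul_comm _ _

lemma roots_prod (m : ℕ) (v : Fin m → ℂ) :
    (∏ j, (X - C (v j))).roots = Multiset.map v Finset.univ.val := by
  have : (∏ j, (X - C (v j))) = (Multiset.map (fun a => X - C a) (Multiset.map v Finset.univ.val)).prod := by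
    rw [Multiset.map_map, Finset.prod_eq_multiset_prod]
    rfl
  rw [this, roots_multiset_prod_X_sub_C]

lemma derivative_fin_prod (m : ℕ) (f : Fin m → ℂ[X]) :
    derivative (∏ k, f k) = ∑ i, (∏ k ∈ Finset.univ.erase i, f k) * derivative (f i) := by
  rw [Finset.prod_eq_multiset_prod, derivative_prod, Finset.sum_eq_multiset_sum]
  rfl

lemma eval_deriv (m : ℕ) (v : Fin m → ℂ) (j : Fin m) :
    Polynomial.eval (v j) (Polynomial.derivative (∏ k, (X - C (v k))))
      = ∏ k ∈ Finset.univ.erase j, (v j - v k) := by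
  rw [derivative_fin_prod, eval_finset_sum, Finset.sum_eq_single j]
  · simp [eval_prod]
  · intro l _ hlj
    have hj : j ∈ Finset.univ.erase l := Finset.mem_erase.mpr ⟨Ne.symm hlj, Finset.mem_univ j⟩
    simp only [derivative_X_sub_C, eval_mul, eval_prod, eval_one, mul_one]
    exact Finset.prod_eq_zero hj (by simp)
  · simp

lemma prod_eval_roots (m : ℕ) (v w : Fin m → ℂ) (g : ℂ → ℂ)
    (h : Multiset.map v Finset.univ.val = Multiset.map w Finset.univ.val) :
    ∏ j, g (v j) = ∏ j, g (w j) := by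
  have hv : ∏ j, g (v j) = ((Multiset.map v Finset.univ.val).map g).prod := by
    rw [Multiset.map_map, Finset.prod_eq_multiset_prod]; rfl
  have hw : ∏ j, g (w j) = ((Multiset.map w Finset.univ.val).map g).prod := by
    rw [Multiset.map_map, Finset.prod_eq_multiset_prod]; rfl
  rw [hv, hw, h]


lemma prod_prod_mul {m : ℕ} (f g : Fin m → Fin m → ℂ) :
    ∏ j, ∏ k ∈ Finset.Ioi j, (f j k * g j k)
      = (∏ j, ∏ k ∈ Finset.Ioi j, f j k) * (∏ j, ∏ k ∈ Finset.Ioi j, g j k) := by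
  rw [← Finset.prod_mul_distrib]
  exact Finset.prod_congr rfl fun j _ => Finset.prod_mul_distrib

lemma four_prod (n : ℕ) : ∏ j : Fin (n+1), ∏ k ∈ Finset.Ioi j, (4:ℂ) = 2^(n*(n+1)) := by
  calc ∏ j : Fin (n+1), ∏ k ∈ Finset.Ioi j, (4:ℂ)
      = ∏ j : Fin (n+1), (4:ℂ)^(Finset.Ioi j).card :=
        Finset.prod_congr rfl fun j _ => Finset.prod_const _
    _ = ∏ j : Fin (n+1), (2:ℂ)^(2 * (Finset.Ioi j).card) := by
        refine Finset.prod_congr rfl fun j _ => ?_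
        rw [pow_mul]; norm_num
    _ = (2:ℂ)^(∑ j : Fin (n+1), 2*(Finset.Ioi j).card) := Finset.prod_pow_eq_pow_sum _ _ _
    _ = _ := by rw [sum_card_Ioi]

/-- Theorem 2.12: for even `n` and a monic self-reciprocal form
`p̃(T,U) = Π (T - t'ⱼU)` (`Π t'ⱼ = -1`), whose image
`q̃(X,Y) = p̃(X+iY, X-iY) = Σ dⱼ X^{n+1-j} Y^j` has real coefficients with `d₀ ≠ 0` and
roots `x'ⱼ` of `q̃(X,1)`, the discriminant `d₀^{2n} Π_{j<k} (x'ⱼ-x'ₖ)²` equals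
`2^{n(n+1)} det K_n` where `K_n = (k_{j-k})`, `k_m = Σ (t'ⱼ)^m`. -/
theorem stmt16 (n : ℕ) (hn : Even n) (t : Fin (n + 1) → ℂ) (ht : ∏ j, t j = -1)
    (d : Fin (n + 2) → ℝ)
    (hpq : ∀ X Y : ℂ,
      ∏ j, ((X + Complex.I * Y) - t j * (X - Complex.I * Y))
        = ∑ j : Fin (n + 2), (d j : ℂ) * X ^ (n + 1 - (j : ℕ)) * Y ^ (j : ℕ))
    (hd0 : d 0 ≠ 0)
    (x : Fin (n + 1) → ℂ)
    (hx : ∀ X : ℂ, (∑ j : Fin (n + 2), (d j : ℂ) * X ^ (n + 1 - (j : ℕ)))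
      = (d 0 : ℂ) * ∏ j, (X - x j)) :
    (d 0 : ℂ) ^ (2 * n) * ∏ j : Fin (n + 1), ∏ k ∈ Finset.Ioi j, (x j - x k) ^ 2
      = 2 ^ (n * (n + 1)) *
        (Matrix.of fun j k : Fin (n + 1) => ∑ l, t l ^ ((j : ℤ) - (k : ℤ))).det := by
  have hd0' : (d 0 : ℂ) ≠ 0 := Complex.ofReal_ne_zero.mpr hd0
  have ht0 : ∀ l, t l ≠ 0 := by
    intro l hl
    have h0 : ∏ j, t j = 0 := Finset.prod_eq_zero (Finset.mem_univ l) hl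
    rw [ht] at h0; norm_num at h0
  -- d 0 = ∏ (1 - t j)
  have hd : (d 0 : ℂ) = ∏ j, (1 - t j) := by
    have h10 := hpq 1 0
    rw [Finset.sum_eq_single 0 (fun j _ hj => by
        have : (j:ℕ) ≠ 0 := fun h => hj (Fin.ext h)
        simp [zero_pow this]) (fun h => absurd (Finset.mem_univ _) h)] at h10
    simpa using h10.symm
  have ht1 : ∀ j, t j ≠ 1 := by
    intro j hj
    apply hd0'
    rw [hd]
    exact Finset.prod_eq_zero (Finset.mem_univ j) (by rw [hj]; ring)
  have htm1 : ∀ j, t j - 1 ≠ 0 := fun j => sub_ne_zero.mpr (ht1 j)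
  set r : Fin (n+1) → ℂ := fun j => Complex.I * (1 + t j) / (t j - 1) with hrdef
  -- pointwise factorization
  have hpt : ∀ X : ℂ, ∏ j, (X - r j) = ∏ j, (X - x j) := by
    intro X
    have h := hpq X 1
    simp only [mul_one, one_pow] at h
    rw [hx X] at h
    have h2 : ∏ j, ((X + Complex.I) - t j * (X - Complex.I))
        = (d 0 : ℂ) * ∏ j, (X - r j) := by
      rw [hd, ← Finset.prod_mul_distrib]
      refine Finset.prod_congr rfl fun j _ => ?_
      rw [hrdef]
      field_simp [htm1 j]
      ring
    rw [h2] at h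
    exact mul_left_cancel₀ hd0' h
  -- polynomial and multiset equality
  have hP : (∏ j, (X - C (r j)) : ℂ[X]) = ∏ j, (X - C (x j)) := by
    apply Polynomial.funext
    intro z
    simpa [eval_prod] using hpt z
  have hms : Multiset.map r Finset.univ.val = Multiset.map x Finset.univ.val := by
    rw [← roots_prod, ← roots_prod, hP]
  -- off-diagonal invariance via derivative
  have hinv : ∏ j, ∏ k ∈ Finset.univ.erase j, (r j - r k)
      = ∏ j, ∏ k ∈ Finset.univ.erase j, (x j - x k) := by
    have h1 := prod_eval_roots _ r x
      (fun z => Polynomial.eval z (Polynomial.derivative (∏ k, (X - C (r k))))) hms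
    calc ∏ j, ∏ k ∈ Finset.univ.erase j, (r j - r k)
        = ∏ j, Polynomial.eval (r j) (Polynomial.derivative (∏ k, (X - C (r k)))) :=
          (Finset.prod_congr rfl fun j _ => eval_deriv _ r j).symm
      _ = ∏ j, Polynomial.eval (x j) (Polynomial.derivative (∏ k, (X - C (r k)))) := h1
      _ = ∏ j, Polynomial.eval (x j) (Polynomial.derivative (∏ k, (X - C (x k)))) := by rw [hP]
      _ = ∏ j, ∏ k ∈ Finset.univ.erase j, (x j - x k) :=
          Finset.prod_congr rfl fun j _ => eval_deriv _ x j
  -- squares invariance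
  have hsq : ∏ j, ∏ k ∈ Finset.Ioi j, (x j - x k)^2
      = ∏ j, ∏ k ∈ Finset.Ioi j, (r j - r k)^2 := by
    have e : ∀ v : Fin (n+1) → ℂ, ∏ j, ∏ k ∈ Finset.univ.erase j, (v j - v k)
        = (∏ j : Fin (n+1), ∏ k ∈ Finset.Ioi j, (-1:ℂ))
          * ∏ j : Fin (n+1), ∏ k ∈ Finset.Ioi j, (v j - v k)^2 := by
      intro v
      rw [← offdiag_prod (n+1) v,
        ← prod_prod_mul (fun j k => (-1:ℂ)) (fun j k => (v j - v k)^2)]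
      refine Finset.prod_congr rfl fun j _ => Finset.prod_congr rfl fun k _ => by ring
    have hcne : (∏ j : Fin (n+1), ∏ k ∈ Finset.Ioi j, (-1:ℂ)) ≠ 0 :=
      Finset.prod_ne_zero_iff.mpr fun j _ =>
        Finset.prod_ne_zero_iff.mpr fun k _ => by norm_num
    have := (e x).symm.trans (hinv.symm.trans (e r))
    exact mul_left_cancel₀ hcne this
  -- compute pair squares for r
  have hrr : ∀ j k : Fin (n+1), (r j - r k)^2
      = ((-1) * (t k - t j)^2) * (4 * (((t j - 1)⁻¹)^2 * ((t k - 1)⁻¹)^2)) := by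
    intro j k
    have e : r j - r k = (2*Complex.I*(t k - t j)) * ((t j - 1)⁻¹ * (t k - 1)⁻¹) := by
      rw [hrdef]
      field_simp [htm1 j, htm1 k]
      ring
    rw [e, mul_pow, mul_pow, mul_pow, mul_pow, Complex.I_sq]
    ring
  set Cq : ℂ := ∏ j, ∏ k ∈ Finset.Ioi j, ((-1) * (t k - t j)^2) with hCq
  have hH : ∏ j, ∏ k ∈ Finset.Ioi j, (r j - r k)^2
      = Cq * (2^(n*(n+1)) * ∏ j, (((t j - 1)⁻¹)^2)^n) := by
    calc ∏ j, ∏ k ∈ Finset.Ioi j, (r j - r k)^2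
        = ∏ j, ∏ k ∈ Finset.Ioi j,
            (((-1) * (t k - t j)^2) * (4 * (((t j - 1)⁻¹)^2 * ((t k - 1)⁻¹)^2))) :=
          Finset.prod_congr rfl fun j _ => Finset.prod_congr rfl fun k _ => hrr j k
      _ = Cq * ∏ j, ∏ k ∈ Finset.Ioi j, (4 * (((t j - 1)⁻¹)^2 * ((t k - 1)⁻¹)^2)) :=
          prod_prod_mul _ _
      _ = Cq * ((∏ j : Fin (n+1), ∏ k ∈ Finset.Ioi j, (4:ℂ))
            * ∏ j, ∏ k ∈ Finset.Ioi j, (((t j - 1)⁻¹)^2 * ((t k - 1)⁻¹)^2)) := by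
          rw [prod_prod_mul]
      _ = Cq * (2^(n*(n+1)) * ∏ j, (((t j - 1)⁻¹)^2)^n) := by
          rw [four_prod, pair_prod]
  -- cancellation of d0 powers
  have hcancel : (d 0:ℂ)^(2*n) * ∏ j, (((t j - 1)⁻¹)^2)^n = 1 := by
    have hone : ∀ j : Fin (n+1), (1 - t j)^(2*n) * (((t j - 1)⁻¹)^2)^n = 1 := by
      intro j
      have hm : (1 - t j) * (t j - 1)⁻¹ = -1 := by
        field_simp [htm1 j]
        ring
      calc (1 - t j)^(2*n) * (((t j - 1)⁻¹)^2)^n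
          = ((1 - t j) * (t j - 1)⁻¹)^(2*n) := by rw [← pow_mul, ← mul_pow]
        _ = 1 := by rw [hm]; exact Even.neg_one_pow (even_two_mul n)
    rw [hd, ← Finset.prod_pow, ← Finset.prod_mul_distrib]
    calc ∏ j, ((1 - t j)^(2*n) * (((t j - 1)⁻¹)^2)^n) = ∏ j : Fin (n+1), (1:ℂ) :=
        Finset.prod_congr rfl fun j _ => hone j
      _ = 1 := Finset.prod_const_one
  -- RHS determinant
  have hK : (Matrix.of fun j k : Fin (n + 1) => ∑ l, t l ^ ((j : ℤ) - (k : ℤ)))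
      = Matrix.transpose (Matrix.vandermonde t) * Matrix.vandermonde (fun l => (t l)⁻¹) := by
    ext j k
    simp only [Matrix.of_apply, Matrix.mul_apply, Matrix.transpose_apply, Matrix.vandermonde]
    refine Finset.sum_congr rfl fun l _ => ?_
    rw [zpow_sub₀ (ht0 l), zpow_natCast, zpow_natCast, div_eq_mul_inv, ← inv_pow]
  have hdet : (Matrix.of fun j k : Fin (n + 1) => ∑ l, t l ^ ((j : ℤ) - (k : ℤ))).det
      = Cq := by
    rw [hK, Matrix.det_mul, Matrix.det_transpose, Matrix.det_vandermonde, Matrix.det_vandermonde]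
    rw [← prod_prod_mul]
    have hsplit : ∏ j, ∏ k ∈ Finset.Ioi j, ((t k - t j) * ((t k)⁻¹ - (t j)⁻¹))
        = ∏ j, ∏ k ∈ Finset.Ioi j, (((-1) * (t k - t j)^2) * ((t j)⁻¹ * (t k)⁻¹)) := by
      refine Finset.prod_congr rfl fun j _ => Finset.prod_congr rfl fun k _ => ?_
      field_simp [ht0 j, ht0 k]
      ring
    rw [hsplit, prod_prod_mul, pair_prod]
    have : ∏ j, ((t j)⁻¹)^n = 1 := by
      rw [Finset.prod_pow, Finset.prod_inv_distrib, ht]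
      simp [Even.neg_one_pow hn]
    rw [this, mul_one, hCq]
  -- assemble
  rw [hsq, hH, hdet]
  calc (d 0:ℂ)^(2*n) * (Cq * (2^(n*(n+1)) * ∏ j, (((t j - 1)⁻¹)^2)^n))
      = (2:ℂ)^(n*(n+1)) * Cq * ((d 0:ℂ)^(2*n) * ∏ j, (((t j - 1)⁻¹)^2)^n) := by ring
    _ = 2^(n*(n+1)) * Cq := by rw [hcancel, mul_one]
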